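/- Let N = {u_1, …, u_n}, let g be a non-negative submodular function on N, let ℓ be a non-negative linear function on N, and set f = g + ℓ. Define finitely supported probability distributions μ_0, …, μ_n on pairs of subsets of N as follows: μ_0 is the point mass at (∅, N); μ_i is obtained from μ_{i−1} by, given a pair (X, Y) in its support, setting a = f(X ∪ {u_i}) − f(X) and b = f(Y \ {u_i}) − f(Y), and moving to (X ∪ {u_i}, Y) with probability 1 if b ≤ 0, to (X, Y \ {u_i}) with probability 1 if b > 0 and a ≤ 0, and otherwise to (X ∪ {u_i}, Y) with probability a/(a+b) and to (X, Y \ {u_i}) with probability b/(a+b). Then for every α ∈ [0, 1/2] and every set S ⊆ N, the expectation of f(X) over (X, Y) ∼ μ_n satisfies E[f(X)] ≥ α·g(S) + (1 − α/2)·ℓ(S). -/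

import Mathlib

/-- The transition kernel of one step of the randomized Double Greedy algorithm on
element `u`: given the current pair `q = (X, Y)`, with `a = f (X ∪ {u}) − f X` and
`b = f (Y \ {u}) − f Y`, move to `(X ∪ {u}, Y)` with probability `1` if `b ≤ 0`,
to `(X, Y \ {u})` with probability `1` if `b > 0` and `a ≤ 0`, and otherwise to
`(X ∪ {u}, Y)` with probability `a/(a+b)` and to `(X, Y \ {u})` with probability
`b/(a+b)`. `dgStepProb f u q p` is the probability of moving from `q` to `p`. -/
noncomputable def dgStepProb {α : Type*} [DecidableEq α]
    (f : Finset α → ℝ) (u : α) (q p : Finset α × Finset α) : ℝ :=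
  let a : ℝ := f (q.1 ∪ {u}) - f q.1
  let b : ℝ := f (q.2 \ {u}) - f q.2
  if b ≤ 0 then (if p = (q.1 ∪ {u}, q.2) then 1 else 0)
  else if a ≤ 0 then (if p = (q.1, q.2 \ {u}) then 1 else 0)
  else (if p = (q.1 ∪ {u}, q.2) then a / (a + b) else 0) +
       (if p = (q.1, q.2 \ {u}) then b / (a + b) else 0)

section aux
variable {α : Type*} [DecidableEq α] (f : Finset α → ℝ) (u : α) (q p : Finset α × Finset α)

lemma dg_case1 (hb : f (q.2 \ {u}) - f q.2 ≤ 0) :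
    dgStepProb f u q p = if p = (q.1 ∪ {u}, q.2) then 1 else 0 := by
  simp [dgStepProb, hb]

lemma dg_case2 (hb : ¬ (f (q.2 \ {u}) - f q.2 ≤ 0)) (ha : f (q.1 ∪ {u}) - f q.1 ≤ 0) :
    dgStepProb f u q p = if p = (q.1, q.2 \ {u}) then 1 else 0 := by
  simp only [dgStepProb, if_neg hb, if_pos ha]

lemma dg_case3 (hb : ¬ (f (q.2 \ {u}) - f q.2 ≤ 0)) (ha : ¬ (f (q.1 ∪ {u}) - f q.1 ≤ 0)) :
    dgStepProb f u q p =
      (if p = (q.1 ∪ {u}, q.2) then (f (q.1 ∪ {u}) - f q.1) / ((f (q.1 ∪ {u}) - f q.1) + (f (q.2 \ {u}) - f q.2)) else 0) +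
      (if p = (q.1, q.2 \ {u}) then (f (q.2 \ {u}) - f q.2) / ((f (q.1 ∪ {u}) - f q.1) + (f (q.2 \ {u}) - f q.2)) else 0) := by
  simp only [dgStepProb, if_neg hb, if_neg ha]

lemma dg_nonneg : 0 ≤ dgStepProb f u q p := by
  by_cases hb : f (q.2 \ {u}) - f q.2 ≤ 0
  · rw [dg_case1 f u q p hb]; positivity
  · by_cases ha : f (q.1 ∪ {u}) - f q.1 ≤ 0
    · rw [dg_case2 f u q p hb ha]; positivity
    · rw [dg_case3 f u q p hb ha]
      push_neg at hb ha
      have hab : 0 < (f (q.1 ∪ {u}) - f q.1) + (f (q.2 \ {u}) - f q.2) := by linarith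
      split_ifs <;> positivity

lemma sum_ite_mul_eval {β : Type*} [Fintype β] [DecidableEq β] (c : β) (v : ℝ) (w : β → ℝ) :
    ∑ p : β, (if p = c then v else 0) * w p = v * w c := by
  simp only [ite_mul, zero_mul]
  rw [Finset.sum_ite_eq' Finset.univ c (fun p => v * w p)]
  simp

end aux

section aux2
variable {α : Type*} [DecidableEq α] [Fintype α] (f : Finset α → ℝ) (u : α) (q : Finset α × Finset α)

/-- expectation of any weight function under one step -/
lemma dg_exp (w : Finset α × Finset α → ℝ) :
    ∑ p : Finset α × Finset α, dgStepProb f u q p * w p =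
      if f (q.2 \ {u}) - f q.2 ≤ 0 then w (q.1 ∪ {u}, q.2)
      else if f (q.1 ∪ {u}) - f q.1 ≤ 0 then w (q.1, q.2 \ {u})
      else (f (q.1 ∪ {u}) - f q.1) / ((f (q.1 ∪ {u}) - f q.1) + (f (q.2 \ {u}) - f q.2)) * w (q.1 ∪ {u}, q.2)
         + (f (q.2 \ {u}) - f q.2) / ((f (q.1 ∪ {u}) - f q.1) + (f (q.2 \ {u}) - f q.2)) * w (q.1, q.2 \ {u}) := by
  by_cases hb : f (q.2 \ {u}) - f q.2 ≤ 0
  · simp only [if_pos hb]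
    calc ∑ p : Finset α × Finset α, dgStepProb f u q p * w p
        = ∑ p : Finset α × Finset α, (if p = (q.1 ∪ {u}, q.2) then (1:ℝ) else 0) * w p := by
          apply Finset.sum_congr rfl; intro p _; rw [dg_case1 f u q p hb]
      _ = 1 * w (q.1 ∪ {u}, q.2) := sum_ite_mul_eval _ _ _
      _ = w (q.1 ∪ {u}, q.2) := one_mul _
  · by_cases ha : f (q.1 ∪ {u}) - f q.1 ≤ 0
    · simp only [if_neg hb, if_pos ha]
      calc ∑ p : Finset α × Finset α, dgStepProb f u q p * w p
          = ∑ p : Finset α × Finset α, (if p = (q.1, q.2 \ {u}) then (1:ℝ) else 0) * w p := by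
            apply Finset.sum_congr rfl; intro p _; rw [dg_case2 f u q p hb ha]
        _ = 1 * w (q.1, q.2 \ {u}) := sum_ite_mul_eval _ _ _
        _ = w (q.1, q.2 \ {u}) := one_mul _
    · simp only [if_neg hb, if_neg ha]
      calc ∑ p : Finset α × Finset α, dgStepProb f u q p * w p
          = ∑ p : Finset α × Finset α,
              ((if p = (q.1 ∪ {u}, q.2) then (f (q.1 ∪ {u}) - f q.1) / ((f (q.1 ∪ {u}) - f q.1) + (f (q.2 \ {u}) - f q.2)) else 0) * w p
             + (if p = (q.1, q.2 \ {u}) then (f (q.2 \ {u}) - f q.2) / ((f (q.1 ∪ {u}) - f q.1) + (f (q.2 \ {u}) - f q.2)) else 0) * w p) := by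
            apply Finset.sum_congr rfl; intro p _; rw [dg_case3 f u q p hb ha, add_mul]
        _ = _ := by rw [Finset.sum_add_distrib, sum_ite_mul_eval, sum_ite_mul_eval]

/-- claim B step: the value of f on Y never decreases -/
lemma dg_step_B : f q.2 ≤ ∑ p : Finset α × Finset α, dgStepProb f u q p * f p.2 := by
  rw [dg_exp]
  by_cases hb : f (q.2 \ {u}) - f q.2 ≤ 0
  · simp [hb]
  · by_cases ha : f (q.1 ∪ {u}) - f q.1 ≤ 0
    · simp only [if_neg hb, if_pos ha]
      push_neg at hb; linarith
    · simp only [if_neg hb, if_neg ha]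
      push_neg at hb ha
      set A := f (q.1 ∪ {u}) - f q.1 with hA
      set B := f (q.2 \ {u}) - f q.2 with hB
      have hab : 0 < A + B := by linarith
      rw [div_mul_eq_mul_div, div_mul_eq_mul_div, ← add_div, le_div_iff₀ hab]
      nlinarith
end aux2

section aux3
variable {α : Type*} [DecidableEq α] [Fintype α] (f : Finset α → ℝ) (u : α) (q : Finset α × Finset α)

lemma dg_step_A (hsub : ∀ A B : Finset α, f (A ∪ B) + f (A ∩ B) ≤ f A + f B)
    (S : Finset α) (hXY : q.1 ⊆ q.2) (huX : u ∉ q.1) (huY : u ∈ q.2) :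
    f ((S ∪ q.1) ∩ q.2) + (f q.1 + f q.2) / 2 ≤
      ∑ p : Finset α × Finset α, dgStepProb f u q p * (f ((S ∪ p.1) ∩ p.2) + (f p.1 + f p.2) / 2) := by
  obtain ⟨X, Y⟩ := q
  simp only at hXY huX huY
  rw [dg_exp]
  simp only
  set O := (S ∪ X) ∩ Y with hO
  have hXY' : ∀ {x}, x ∈ X → x ∈ Y := fun h => hXY h
  have hXO : ∀ {x}, x ∈ X → x ∈ O := by
    intro x h; rw [hO]; simp only [Finset.mem_inter, Finset.mem_union]
    exact ⟨Or.inr h, hXY' h⟩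
  have hOY : ∀ {x}, x ∈ O → x ∈ Y := by
    intro x h; rw [hO] at h; exact (Finset.mem_inter.1 h).2
  -- basic identities
  have I1 : (X ∪ {u}) ∪ (Y \ {u}) = Y := by
    ext x
    simp only [Finset.mem_union, Finset.mem_sdiff, Finset.mem_singleton]
    have h2 : x = u → x ∈ Y := fun h => h ▸ huY
    have h1 : x ∈ X → x ∈ Y := hXY'
    tauto
  have I2 : (X ∪ {u}) ∩ (Y \ {u}) = X := by
    ext x
    simp only [Finset.mem_inter, Finset.mem_union, Finset.mem_sdiff, Finset.mem_singleton]
    have h1 : x ∈ X → x ∈ Y := hXY'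
    have h3 : x ∈ X → ¬ x = u := fun h he => huX (he ▸ h)
    tauto
  have hi1 : f Y + f X ≤ f (X ∪ {u}) + f (Y \ {u}) := by
    have := hsub (X ∪ {u}) (Y \ {u}); rw [I1, I2] at this; linarith
  set A := f (X ∪ {u}) - f X with hA
  set B := f (Y \ {u}) - f Y with hB
  have habnn : 0 ≤ A + B := by rw [hA, hB]; linarith
  clear_value O A B
  by_cases huS : u ∈ S
  · -- u ∈ S : taking keeps O, removing sends O to O \ {u}
    have huO : u ∈ O := by
      rw [hO]; exact Finset.mem_inter.2 ⟨Finset.mem_union_left _ huS, huY⟩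
    have J1 : (S ∪ (X ∪ {u})) ∩ Y = O := by
      rw [hO]; ext x
      simp only [Finset.mem_inter, Finset.mem_union, Finset.mem_singleton]
      have h2 : x = u → x ∈ S := fun h => h ▸ huS
      tauto
    have J2 : (S ∪ X) ∩ (Y \ {u}) = O \ {u} := by
      rw [hO]; ext x
      simp only [Finset.mem_inter, Finset.mem_union, Finset.mem_sdiff, Finset.mem_singleton]
      tauto
    have J3 : (X ∪ {u}) ∪ (O \ {u}) = O := by
      ext x
      simp only [Finset.mem_union, Finset.mem_sdiff, Finset.mem_singleton]
      have h2 : x = u → x ∈ O := fun h => h ▸ huO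
      have h1 : x ∈ X → x ∈ O := hXO
      tauto
    have J4 : (X ∪ {u}) ∩ (O \ {u}) = X := by
      ext x
      simp only [Finset.mem_inter, Finset.mem_union, Finset.mem_sdiff, Finset.mem_singleton]
      have h1 : x ∈ X → x ∈ O := hXO
      have h3 : x ∈ X → ¬ x = u := fun h he => huX (he ▸ h)
      tauto
    have hi3 : f O + f X ≤ f (X ∪ {u}) + f (O \ {u}) := by
      have := hsub (X ∪ {u}) (O \ {u}); rw [J3, J4] at this; linarith
    by_cases hb : B ≤ 0
    · rw [if_pos hb, J1]
      have hage : 0 ≤ A := by linarith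
      linarith
    · by_cases ha : A ≤ 0
      · rw [if_neg hb, if_pos ha, J2]
        push_neg at hb
        linarith
      · rw [if_neg hb, if_neg ha, J1, J2]
        push_neg at hb ha
        have hab : 0 < A + B := by linarith
        rw [div_mul_eq_mul_div, div_mul_eq_mul_div, ← add_div, le_div_iff₀ hab]
        have key : f O - A ≤ f (O \ {u}) := by linarith
        have h1 : B * (f O - A) ≤ B * f (O \ {u}) := mul_le_mul_of_nonneg_left key (le_of_lt hb)
        have e1 : f (X ∪ {u}) = f X + A := by rw [hA]; ring
        have e2 : f (Y \ {u}) = f Y + B := by rw [hB]; ring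
        rw [e1, e2]
        nlinarith [sq_nonneg (A - B), h1]
  · -- u ∉ S : taking sends O to O ∪ {u}, removing keeps O
    have huO : u ∉ O := by
      rw [hO]; intro h
      rcases Finset.mem_union.1 (Finset.mem_inter.1 h).1 with h' | h'
      · exact huS h'
      · exact huX h'
    have J1 : (S ∪ (X ∪ {u})) ∩ Y = O ∪ {u} := by
      rw [hO]; ext x
      simp only [Finset.mem_inter, Finset.mem_union, Finset.mem_singleton]
      have h2 : x = u → x ∈ Y := fun h => h ▸ huY
      tauto
    have J2 : (S ∪ X) ∩ (Y \ {u}) = O := by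
      rw [hO]; ext x
      simp only [Finset.mem_inter, Finset.mem_union, Finset.mem_sdiff, Finset.mem_singleton]
      have h3 : x = u → ¬ x ∈ S := fun h hs => huS (h ▸ hs)
      have h4 : x = u → ¬ x ∈ X := fun h hs => huX (h ▸ hs)
      tauto
    have J3 : (O ∪ {u}) ∪ (Y \ {u}) = Y := by
      ext x
      simp only [Finset.mem_union, Finset.mem_sdiff, Finset.mem_singleton]
      have h2 : x = u → x ∈ Y := fun h => h ▸ huY
      have h1 : x ∈ O → x ∈ Y := hOY
      tauto
    have J4 : (O ∪ {u}) ∩ (Y \ {u}) = O := by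
      ext x
      simp only [Finset.mem_inter, Finset.mem_union, Finset.mem_sdiff, Finset.mem_singleton]
      have h1 : x ∈ O → x ∈ Y := hOY
      have h3 : x ∈ O → ¬ x = u := fun h he => huO (he ▸ h)
      tauto
    have hi2 : f Y + f O ≤ f (O ∪ {u}) + f (Y \ {u}) := by
      have := hsub (O ∪ {u}) (Y \ {u}); rw [J3, J4] at this; linarith
    by_cases hb : B ≤ 0
    · rw [if_pos hb, J1]
      have hage : 0 ≤ A := by linarith
      linarith
    · by_cases ha : A ≤ 0
      · rw [if_neg hb, if_pos ha, J2]
        push_neg at hb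
        linarith
      · rw [if_neg hb, if_neg ha, J1, J2]
        push_neg at hb ha
        have hab : 0 < A + B := by linarith
        rw [div_mul_eq_mul_div, div_mul_eq_mul_div, ← add_div, le_div_iff₀ hab]
        have key : f O - B ≤ f (O ∪ {u}) := by linarith
        have h1 : A * (f O - B) ≤ A * f (O ∪ {u}) := mul_le_mul_of_nonneg_left key (le_of_lt ha)
        have e1 : f (X ∪ {u}) = f X + A := by rw [hA]; ring
        have e2 : f (Y \ {u}) = f Y + B := by rw [hB]; ring
        rw [e1, e2]
        nlinarith [sq_nonneg (A - B), h1]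
end aux3

section auxsup
variable {α : Type*} [DecidableEq α] (f : Finset α → ℝ) (u : α) (q p : Finset α × Finset α)

lemma dg_support (h : dgStepProb f u q p ≠ 0) :
    p = (q.1 ∪ {u}, q.2) ∨ p = (q.1, q.2 \ {u}) := by
  unfold dgStepProb at h
  simp only at h
  split_ifs at h with h1 h2 h3 h4 h5 h6 h7
  all_goals first
    | (left; assumption)
    | (right; assumption)
    | (exact absurd rfl h)
    | (exact absurd (by ring) h)
end auxsup

/-- **Randomized Double Greedy guarantee.**
Let `N = {u 0, …, u (n-1)}` be a finite ground set, `g` a non-negative submodular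
function, `ℓ` a non-negative linear function (with weights `a`), and `f = g + ℓ`.
Let `μ 0` be the point mass at `(∅, N)` and let `μ (i+1)` be obtained from `μ i`
by applying the randomized Double Greedy transition on element `u i`.
Then for every `r ∈ [0, 1/2]` and every `S ⊆ N`, the expectation of `f X` over
`(X, Y) ∼ μ n` is at least `r·g S + (1 − r/2)·ℓ S`. -/
theorem randomized_double_greedy
    {α : Type*} [Fintype α] [DecidableEq α] {n : ℕ}
    (u : Fin n → α) (hu : Function.Bijective u)
    (g : Finset α → ℝ)
    (hg_sub : ∀ S T : Finset α, g (S ∪ T) + g (S ∩ T) ≤ g S + g T)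
    (hg_nonneg : ∀ S : Finset α, 0 ≤ g S)
    (a : α → ℝ) (ha : ∀ v : α, 0 ≤ a v)
    (ℓ : Finset α → ℝ) (hℓ : ∀ S : Finset α, ℓ S = ∑ v ∈ S, a v)
    (f : Finset α → ℝ) (hf : ∀ S : Finset α, f S = g S + ℓ S)
    (μ : ℕ → Finset α × Finset α → ℝ)
    (hμ0 : ∀ p : Finset α × Finset α, μ 0 p = if p = (∅, Finset.univ) then 1 else 0)
    (hμstep : ∀ i : Fin n, ∀ p : Finset α × Finset α,
      μ (i.val + 1) p = ∑ q : Finset α × Finset α, μ i.val q * dgStepProb f (u i) q p)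
    (r : ℝ) (hr0 : 0 ≤ r) (hr1 : r ≤ 1 / 2) (S : Finset α) :
    (∑ p : Finset α × Finset α, μ n p * f p.1) ≥ r * g S + (1 - r / 2) * ℓ S := by
  classical
  -- f is submodular
  have hℓ_mod : ∀ A B : Finset α, ℓ (A ∪ B) + ℓ (A ∩ B) = ℓ A + ℓ B := by
    intro A B
    rw [hℓ, hℓ, hℓ, hℓ]
    exact Finset.sum_union_inter
  have hf_sub : ∀ A B : Finset α, f (A ∪ B) + f (A ∩ B) ≤ f A + f B := by
    intro A B
    rw [hf, hf, hf, hf]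
    have h1 := hg_sub A B
    have h2 := hℓ_mod A B
    linarith
  -- the set of still-undecided elements
  set R : ℕ → Finset α := fun i =>
    Finset.image u (Finset.univ.filter fun j : Fin n => i ≤ j.val) with hR
  have hR0 : R 0 = Finset.univ := by
    apply Finset.eq_univ_of_forall
    intro x
    obtain ⟨j, rfl⟩ := hu.2 x
    simp only [hR, Finset.mem_image, Finset.mem_filter, Finset.mem_univ, true_and]
    exact ⟨j, Nat.zero_le _, rfl⟩
  have hRn : R n = ∅ := by
    ext x
    simp only [hR, Finset.mem_image, Finset.mem_filter, Finset.mem_univ, true_and,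
      Finset.notMem_empty, iff_false]
    rintro ⟨j, hj, -⟩
    exact absurd hj (by omega)
  have hmem : ∀ i : Fin n, u i ∈ R i.val := by
    intro i
    simp only [hR, Finset.mem_image, Finset.mem_filter, Finset.mem_univ, true_and]
    exact ⟨i, le_rfl, rfl⟩
  have hRsucc : ∀ i : Fin n, R (i.val + 1) = R i.val \ {u i} := by
    intro i
    ext x
    simp only [hR, Finset.mem_image, Finset.mem_filter, Finset.mem_univ, true_and,
      Finset.mem_sdiff, Finset.mem_singleton]
    constructor
    · rintro ⟨j, hj, rfl⟩
      refine ⟨⟨j, by omega, rfl⟩, fun he => ?_⟩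
      have := hu.1 he
      omega
    · rintro ⟨⟨j, hj, rfl⟩, hne⟩
      refine ⟨j, ?_, rfl⟩
      have : j ≠ i := fun h => hne (by rw [h])
      have : (j : ℕ) ≠ (i : ℕ) := fun h => this (Fin.ext h)
      omega
  -- the main invariant, by induction over the steps
  have main : ∀ i : ℕ, i ≤ n →
      (∀ q : Finset α × Finset α, 0 ≤ μ i q) ∧
      (∀ q : Finset α × Finset α, μ i q ≠ 0 → q.2 = q.1 ∪ R i ∧ Disjoint q.1 (R i)) ∧
      (f Finset.univ ≤ ∑ q : Finset α × Finset α, μ i q * f q.2) ∧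
      (f S + (f ∅ + f Finset.univ) / 2 ≤
        ∑ q : Finset α × Finset α, μ i q * (f ((S ∪ q.1) ∩ q.2) + (f q.1 + f q.2) / 2)) := by
    intro i
    induction i with
    | zero =>
      intro _
      refine ⟨?_, ?_, ?_, ?_⟩
      · intro q; rw [hμ0]; split_ifs <;> norm_num
      · intro q hq
        rw [hμ0] at hq
        have hq' : q = (∅, Finset.univ) := by
          by_contra h; rw [if_neg h] at hq; exact hq rfl
        subst hq'
        constructor
        · rw [hR0]; simp
        · simp
      · have : ∀ q : Finset α × Finset α, μ 0 q * f q.2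
            = (if q = ((∅ : Finset α), (Finset.univ : Finset α)) then (1:ℝ) else 0) * f q.2 := by
          intro q; rw [hμ0]
        rw [Finset.sum_congr rfl fun q _ => this q, sum_ite_mul_eval]
        simp
      · have : ∀ q : Finset α × Finset α,
            μ 0 q * (f ((S ∪ q.1) ∩ q.2) + (f q.1 + f q.2) / 2)
            = (if q = ((∅ : Finset α), (Finset.univ : Finset α)) then (1:ℝ) else 0)
              * (f ((S ∪ q.1) ∩ q.2) + (f q.1 + f q.2) / 2) := by
          intro q; rw [hμ0]
        rw [Finset.sum_congr rfl fun q _ => this q, sum_ite_mul_eval]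
        simp
    | succ i ih =>
      intro hin
      have hi : i < n := Nat.lt_of_succ_le hin
      obtain ⟨IH1, IH2, IH3, IH4⟩ := ih (Nat.le_of_lt hi)
      set i' : Fin n := ⟨i, hi⟩ with hi'
      have hstep : ∀ p, μ (i + 1) p = ∑ q : Finset α × Finset α, μ i q * dgStepProb f (u i') q p := hμstep i'
      -- facts about good states
      have hgoodfacts : ∀ q : Finset α × Finset α, μ i q ≠ 0 →
          q.1 ⊆ q.2 ∧ u i' ∉ q.1 ∧ u i' ∈ q.2 := by
        intro q hq
        obtain ⟨h1, h2⟩ := IH2 q hq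
        refine ⟨?_, ?_, ?_⟩
        · rw [h1]; exact Finset.subset_union_left
        · exact fun hx => (Finset.disjoint_left.mp h2 hx) (hmem i')
        · rw [h1]; exact Finset.mem_union_right _ (hmem i')
      refine ⟨?_, ?_, ?_, ?_⟩
      · intro q
        rw [hstep]
        exact Finset.sum_nonneg fun p _ => mul_nonneg (IH1 p) (dg_nonneg f (u i') p q)
      · intro p hp
        rw [hstep] at hp
        obtain ⟨q, -, hq⟩ := Finset.exists_ne_zero_of_sum_ne_zero hp
        have hμq : μ i q ≠ 0 := fun h => hq (by rw [h, zero_mul])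
        have hdg : dgStepProb f (u i') q p ≠ 0 := fun h => hq (by rw [h, mul_zero])
        obtain ⟨hXY, huX, huY⟩ := hgoodfacts q hμq
        obtain ⟨hq1, hq2⟩ := IH2 q hμq
        have hRs : R (i + 1) = R i \ {u i'} := hRsucc i'
        rcases dg_support f (u i') q p hdg with hp' | hp'
        · subst hp'
          constructor
          · show q.2 = (q.1 ∪ {u i'}) ∪ R (i + 1)
            rw [hRs, hq1]
            ext x
            simp only [Finset.mem_union, Finset.mem_sdiff, Finset.mem_singleton]
            have h2 : x = u i' → x ∈ R i := fun h => h ▸ hmem i'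
            tauto
          · show Disjoint (q.1 ∪ {u i'}) (R (i + 1))
            rw [hRs, Finset.disjoint_union_left]
            constructor
            · exact Finset.disjoint_of_subset_right (Finset.sdiff_subset) hq2
            · simp
        · subst hp'
          constructor
          · show q.2 \ {u i'} = q.1 ∪ R (i + 1)
            rw [hRs, hq1]
            ext x
            simp only [Finset.mem_union, Finset.mem_sdiff, Finset.mem_singleton]
            have h3 : x ∈ q.1 → ¬ x = u i' := fun h he => huX (he ▸ h)
            tauto
          · show Disjoint q.1 (R (i + 1))
            rw [hRs]
            exact Finset.disjoint_of_subset_right (Finset.sdiff_subset) hq2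
      · have heq : ∑ p : Finset α × Finset α, μ (i + 1) p * f p.2
            = ∑ q : Finset α × Finset α, μ i q * (∑ p : Finset α × Finset α,
                dgStepProb f (u i') q p * f p.2) := by
          simp only [hstep, Finset.sum_mul, mul_assoc]
          rw [Finset.sum_comm]
          simp only [← Finset.mul_sum]
        rw [heq]
        refine le_trans IH3 (Finset.sum_le_sum fun q _ => ?_)
        exact mul_le_mul_of_nonneg_left (dg_step_B f (u i') q) (IH1 q)
      · have heq : ∑ p : Finset α × Finset α,
              μ (i + 1) p * (f ((S ∪ p.1) ∩ p.2) + (f p.1 + f p.2) / 2)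
            = ∑ q : Finset α × Finset α, μ i q * (∑ p : Finset α × Finset α,
                dgStepProb f (u i') q p * (f ((S ∪ p.1) ∩ p.2) + (f p.1 + f p.2) / 2)) := by
          simp only [hstep, Finset.sum_mul, mul_assoc]
          rw [Finset.sum_comm]
          simp only [← Finset.mul_sum]
        rw [heq]
        refine le_trans IH4 (Finset.sum_le_sum fun q _ => ?_)
        by_cases hμq : μ i q = 0
        · rw [hμq, zero_mul, zero_mul]
        · obtain ⟨hXY, huX, huY⟩ := hgoodfacts q hμq
          exact mul_le_mul_of_nonneg_left (dg_step_A f (u i') q hf_sub S hXY huX huY) (IH1 q)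
  obtain ⟨hnn, hsupp, hBn, hAn⟩ := main n le_rfl
  have hqq : ∀ q : Finset α × Finset α, μ n q ≠ 0 → q.2 = q.1 := by
    intro q hq
    have := (hsupp q hq).1
    rwa [hRn, Finset.union_empty] at this
  set E := ∑ p : Finset α × Finset α, μ n p * f p.1 with hE
  have hB' : f Finset.univ ≤ E := by
    rw [hE]
    refine le_trans hBn (le_of_eq (Finset.sum_congr rfl fun p _ => ?_))
    by_cases h : μ n p = 0
    · rw [h, zero_mul, zero_mul]
    · rw [hqq p h]
  have hA' : f S + (f ∅ + f Finset.univ) / 2 ≤ 2 * E := by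
    refine le_trans hAn (le_of_eq ?_)
    rw [hE, Finset.mul_sum]
    refine Finset.sum_congr rfl fun p _ => ?_
    by_cases h : μ n p = 0
    · rw [h]; ring
    · rw [hqq p h]
      have : (S ∪ p.1) ∩ p.1 = p.1 := Finset.inter_eq_right.mpr Finset.subset_union_right
      rw [this]
      ring
  -- numeric facts
  have hlemp : ℓ ∅ = 0 := by rw [hℓ]; simp
  have hfemp : 0 ≤ f ∅ := by rw [hf, hlemp]; simpa using hg_nonneg ∅
  have hℓmono : ℓ S ≤ ℓ Finset.univ := by
    rw [hℓ, hℓ]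
    exact Finset.sum_le_sum_of_subset_of_nonneg (Finset.subset_univ S)
      (fun v _ _ => ha v)
  have hfU : ℓ S ≤ f Finset.univ := by
    rw [hf]
    have := hg_nonneg Finset.univ
    linarith
  have hfS : f S = g S + ℓ S := hf S
  have q1 : g S + (3 / 2) * ℓ S ≤ 2 * E := by linarith
  have q2 : ℓ S ≤ E := le_trans hfU hB'
  have p1 := mul_le_mul_of_nonneg_left q1 hr0
  have p2 := mul_le_mul_of_nonneg_left q2 (by linarith : (0:ℝ) ≤ 1 - 2 * r)
  rw [ge_iff_le, hE] at *
  nlinarith [p1, p2]
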